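/- Matrix Callebaut inequality via tensor products: for positive definite matrices A_1,...,A_m, B_1,...,B_m and 1/2 ≤ s ≤ t ≤ 1, one has ∑_j (A_j ♯_s B_j) ⊗ ∑_j (A_j ♯_(1-s) B_j) + ∑_j (A_j ♯_(1-s) B_j) ⊗ ∑_j (A_j ♯_s B_j) ≤ ∑_j (A_j ♯_t B_j) ⊗ ∑_j (A_j ♯_(1-t) B_j) + ∑_j (A_j ♯_(1-t) B_j) ⊗ ∑_j (A_j ♯_t B_j) in the Loewner order. -/

import Mathlib

open Matrix Finset
open scoped ComplexOrder

/-- Real power of a matrix via the spectral decomposition (junk value if not Hermitian). -/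
noncomputable def mrpow {l : Type*} [Fintype l] [DecidableEq l] (A : Matrix l l ℂ) (r : ℝ) :
    Matrix l l ℂ :=
  if hA : A.IsHermitian then
    (hA.eigenvectorUnitary : Matrix l l ℂ) *
      Matrix.diagonal (fun i => ((hA.eigenvalues i ^ r : ℝ) : ℂ)) *
      (star hA.eigenvectorUnitary : Matrix l l ℂ)
  else A

/-- Weighted matrix geometric mean `A ♯ₜ B = A^(1/2) (A^(-1/2) B A^(-1/2))^t A^(1/2)`. -/
noncomputable def wgmean {l : Type*} [Fintype l] [DecidableEq l] (A B : Matrix l l ℂ) (t : ℝ) :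
    Matrix l l ℂ :=
  mrpow A (1/2) * mrpow (mrpow A (-(1/2)) * B * mrpow A (-(1/2))) t * mrpow A (1/2)

/-- Loewner order: `A ≤ B` iff `B - A` is positive semidefinite. -/
def loewnerLE {l : Type*} [Fintype l] [DecidableEq l] (A B : Matrix l l ℂ) : Prop :=
  (B - A).PosSemidef

set_option linter.unusedSectionVars false
set_option linter.unusedVariables false

open Polynomial

section PolyTools
variable {l : Type*} [Fintype l] [DecidableEq l]

lemma unitary_conj_pow (V : Matrix l l ℂ) (hV : V ∈ Matrix.unitaryGroup l ℂ)
    (M : Matrix l l ℂ) (k : ℕ) :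
    (V * M * star V) ^ k = V * M ^ k * star V := by
  induction k with
  | zero => simpa using (Matrix.mem_unitaryGroup_iff.mp hV).symm
  | succ k ih =>
    rw [pow_succ, ih, pow_succ]
    simp only [← Matrix.mul_assoc]
    rw [Matrix.mul_assoc (V * M ^ k) (star V) V, Matrix.mem_unitaryGroup_iff'.mp hV,
      Matrix.mul_one]

lemma aeval_unitary_conj (V : Matrix l l ℂ) (hV : V ∈ Matrix.unitaryGroup l ℂ)
    (M : Matrix l l ℂ) (p : ℂ[X]) :
    aeval (V * M * star V) p = V * aeval M p * star V := by
  induction p using Polynomial.induction_on' with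
  | add p q hp hq => simp [hp, hq, Matrix.mul_add, Matrix.add_mul]
  | monomial n a =>
    simp only [aeval_monomial, unitary_conj_pow V hV, Algebra.algebraMap_eq_smul_one]
    rw [smul_mul_assoc, Matrix.one_mul, smul_mul_assoc, Matrix.mul_smul, smul_mul_assoc,
      Matrix.one_mul]

lemma aeval_diagonal (d : l → ℂ) (p : ℂ[X]) :
    aeval (Matrix.diagonal d) p = Matrix.diagonal (fun i => aeval (d i) p) := by
  have h := aeval_algHom_apply (Matrix.diagonalAlgHom (n := l) (α := ℂ) ℂ) d p
  simp only [Matrix.diagonalAlgHom_apply] at h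
  rw [h]
  exact congrArg Matrix.diagonal (funext fun i =>
    (aeval_algHom_apply (Pi.evalAlgHom ℂ (fun _ : l => ℂ) i) d p).symm)

lemma exists_interpol (S : Finset ℝ) (f : ℝ → ℝ) :
    ∃ p : ℂ[X], ∀ x ∈ S, aeval (x : ℂ) p = (f x : ℂ) := by
  classical
  refine ⟨Lagrange.interpolate (S.image (fun x : ℝ => (x : ℂ))) id
    (fun z => (f z.re : ℂ)), fun x hx => ?_⟩
  have h := Lagrange.eval_interpolate_at_node (s := S.image (fun x : ℝ => (x : ℂ)))
    (v := id) (r := fun z : ℂ => (f z.re : ℂ)) (i := (x : ℂ))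
    (Set.injOn_id _) (Finset.mem_image_of_mem _ hx)
  rw [← coe_aeval_eq_eval] at h
  exact h

lemma cfc_eq_aeval {A : Matrix l l ℂ} (hA : A.IsHermitian) (f : ℝ → ℝ) (p : ℂ[X])
    (hp : ∀ i, aeval ((hA.eigenvalues i : ℝ) : ℂ) p = (f (hA.eigenvalues i) : ℂ)) :
    hA.cfc f = aeval A p := by
  conv_rhs => rw [hA.spectral_theorem, Unitary.conjStarAlgAut_apply]
  rw [aeval_unitary_conj _ (Matrix.IsHermitian.eigenvectorUnitary hA).2, aeval_diagonal,
    Matrix.IsHermitian.cfc, Unitary.conjStarAlgAut_apply]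
  refine congrArg (fun D => _ * D * _) (congrArg Matrix.diagonal (funext fun i => ?_))
  simp only [Function.comp_apply]
  exact (hp i).symm

lemma cfc_eq_of_decomp {A : Matrix l l ℂ} (hA : A.IsHermitian) (V : Matrix l l ℂ)
    (hV : V ∈ Matrix.unitaryGroup l ℂ) (c : l → ℝ)
    (hd : A = V * Matrix.diagonal (fun i => ((c i : ℝ) : ℂ)) * star V) (f : ℝ → ℝ) :
    hA.cfc f = V * Matrix.diagonal (fun i => ((f (c i) : ℝ) : ℂ)) * star V := by
  obtain ⟨p, hp⟩ := exists_interpol ((image hA.eigenvalues univ) ∪ (image c univ)) f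
  rw [cfc_eq_aeval hA f p (fun i => hp _ (by simp [Finset.mem_union]))]
  conv_lhs => rw [hd]
  rw [aeval_unitary_conj _ hV, aeval_diagonal]
  refine congrArg (fun D => _ * D * _) (congrArg Matrix.diagonal (funext fun i => ?_))
  exact hp (c i) (by simp [Finset.mem_union])

lemma cfc_intertwine {M N : Matrix l l ℂ} (hM : M.IsHermitian) (hN : N.IsHermitian)
    (X : Matrix l l ℂ) (h : X * M = N * X) (f : ℝ → ℝ) :
    X * hM.cfc f = hN.cfc f * X := by
  obtain ⟨p, hp⟩ := exists_interpol ((image hM.eigenvalues univ) ∪ (image hN.eigenvalues univ)) f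
  rw [cfc_eq_aeval hM f p (fun i => hp _ (by simp [Finset.mem_union])),
    cfc_eq_aeval hN f p (fun i => hp _ (by simp [Finset.mem_union]))]
  have hpow : ∀ k : ℕ, X * M ^ k = N ^ k * X := by
    intro k
    induction k with
    | zero => simp
    | succ k ih => rw [pow_succ, pow_succ, ← Matrix.mul_assoc, ih, Matrix.mul_assoc, h,
        ← Matrix.mul_assoc]
  rw [aeval_eq_sum_range, aeval_eq_sum_range, Finset.mul_sum, Finset.sum_mul]
  refine Finset.sum_congr rfl fun k _ => ?_
  rw [Matrix.mul_smul, Matrix.smul_mul, hpow k]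

end PolyTools

section CfcBasic
variable {l : Type*} [Fintype l] [DecidableEq l]

section cfcbasic
variable {A : Matrix l l ℂ} (hA : A.IsHermitian)

lemma star_eigU_mul : (star (Matrix.IsHermitian.eigenvectorUnitary hA) : Matrix l l ℂ) *
    (Matrix.IsHermitian.eigenvectorUnitary hA : Matrix l l ℂ) = 1 :=
  Matrix.mem_unitaryGroup_iff'.mp (Matrix.IsHermitian.eigenvectorUnitary hA).2

lemma eigU_mul_star : (Matrix.IsHermitian.eigenvectorUnitary hA : Matrix l l ℂ) *
    (star (Matrix.IsHermitian.eigenvectorUnitary hA) : Matrix l l ℂ) = 1 :=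
  Matrix.mem_unitaryGroup_iff.mp (Matrix.IsHermitian.eigenvectorUnitary hA).2

lemma cfc_congr_eigs {f g : ℝ → ℝ} (h : ∀ i, f (hA.eigenvalues i) = g (hA.eigenvalues i)) :
    hA.cfc f = hA.cfc g := by
  rw [Matrix.IsHermitian.cfc, Matrix.IsHermitian.cfc, Unitary.conjStarAlgAut_apply, Unitary.conjStarAlgAut_apply]
  refine congrArg (fun D => _ * D * _) (congrArg Matrix.diagonal (funext fun i => ?_))
  simp only [Function.comp_apply, h i]

lemma cfc_mul_cfc (f g : ℝ → ℝ) :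
    hA.cfc f * hA.cfc g = hA.cfc (fun x => f x * g x) := by
  rw [Matrix.IsHermitian.cfc, Matrix.IsHermitian.cfc, Matrix.IsHermitian.cfc, Unitary.conjStarAlgAut_apply, Unitary.conjStarAlgAut_apply, Unitary.conjStarAlgAut_apply]
  simp only [Matrix.mul_assoc]
  rw [← Matrix.mul_assoc (star (Matrix.IsHermitian.eigenvectorUnitary hA) : Matrix l l ℂ)
    (Matrix.IsHermitian.eigenvectorUnitary hA : Matrix l l ℂ), star_eigU_mul, Matrix.one_mul,
    ← Matrix.mul_assoc (Matrix.diagonal _), Matrix.diagonal_mul_diagonal]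
  refine congrArg (fun D => _ * (D * _)) (congrArg Matrix.diagonal (funext fun i => ?_))
  simp only [Function.comp_apply]
  push_cast
  ring

lemma cfc_add_cfc (f g : ℝ → ℝ) :
    hA.cfc f + hA.cfc g = hA.cfc (fun x => f x + g x) := by
  rw [Matrix.IsHermitian.cfc, Matrix.IsHermitian.cfc, Matrix.IsHermitian.cfc, Unitary.conjStarAlgAut_apply, Unitary.conjStarAlgAut_apply, Unitary.conjStarAlgAut_apply,
    ← Matrix.add_mul, ← Matrix.mul_add, Matrix.diagonal_add]
  refine congrArg (fun D => _ * D * _) (congrArg Matrix.diagonal (funext fun i => ?_))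
  simp only [Function.comp_apply, Pi.add_apply]
  push_cast
  ring

lemma cfc_sub_cfc (f g : ℝ → ℝ) :
    hA.cfc f - hA.cfc g = hA.cfc (fun x => f x - g x) := by
  rw [Matrix.IsHermitian.cfc, Matrix.IsHermitian.cfc, Matrix.IsHermitian.cfc, Unitary.conjStarAlgAut_apply, Unitary.conjStarAlgAut_apply, Unitary.conjStarAlgAut_apply,
    ← Matrix.sub_mul, ← Matrix.mul_sub, Matrix.diagonal_sub]
  refine congrArg (fun D => _ * D * _) (congrArg Matrix.diagonal (funext fun i => ?_))
  simp only [Function.comp_apply, Pi.sub_apply]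
  push_cast
  ring

lemma cfc_isHermitian (f : ℝ → ℝ) : (hA.cfc f).IsHermitian := by
  rw [← hA.cfc_eq]
  exact cfc_predicate _ A

lemma cfc_posSemidef (f : ℝ → ℝ) (hf : ∀ i, 0 ≤ f (hA.eigenvalues i)) :
    (hA.cfc f).PosSemidef := by
  rw [Matrix.IsHermitian.cfc, Unitary.conjStarAlgAut_apply, Matrix.star_eq_conjTranspose]
  refine Matrix.PosSemidef.mul_mul_conjTranspose_same ?_ _
  refine Matrix.PosSemidef.diagonal fun i => ?_
  simp only [Function.comp_apply, Pi.zero_apply]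
  exact Complex.zero_le_real.mpr (hf i)

lemma cfc_one' {f : ℝ → ℝ} (h : ∀ i, f (hA.eigenvalues i) = 1) : hA.cfc f = 1 := by
  rw [Matrix.IsHermitian.cfc, Unitary.conjStarAlgAut_apply]
  have : Matrix.diagonal (RCLike.ofReal ∘ f ∘ hA.eigenvalues) = (1 : Matrix l l ℂ) := by
    rw [← Matrix.diagonal_one]
    exact congrArg Matrix.diagonal (funext fun i => by simp [h i])
  rw [this, Matrix.mul_one, eigU_mul_star]

lemma cfc_eq_self {f : ℝ → ℝ} (h : ∀ i, f (hA.eigenvalues i) = hA.eigenvalues i) :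
    hA.cfc f = A := by
  rw [Matrix.IsHermitian.cfc, Unitary.conjStarAlgAut_apply]
  conv_rhs => rw [hA.spectral_theorem, Unitary.conjStarAlgAut_apply]
  exact congrArg (fun D => _ * D * _) (congrArg Matrix.diagonal (funext fun i => by simp [h i]))

end cfcbasic

set_option maxHeartbeats 1000000 in
lemma posDef_conj {M : Matrix l l ℂ} (hM : M.PosDef) {B : Matrix l l ℂ} (hB : IsUnit B) :
    (B * M * Bᴴ).PosDef := by
  exact hM.mul_mul_conjTranspose_same (Matrix.vecMul_injective_iff_isUnit.mpr hB)

lemma cfc_posDef {A : Matrix l l ℂ} (hA : A.IsHermitian) (f : ℝ → ℝ)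
    (hf : ∀ i, 0 < f (hA.eigenvalues i)) : (hA.cfc f).PosDef := by
  rw [Matrix.IsHermitian.cfc, Unitary.conjStarAlgAut_apply, Matrix.star_eq_conjTranspose]
  refine posDef_conj (Matrix.PosDef.diagonal fun i => ?_)
    ⟨⟨_, _, eigU_mul_star hA, star_eigU_mul hA⟩, rfl⟩
  simp only [Function.comp_apply]
  exact Complex.zero_lt_real.mpr (hf i)

end CfcBasic

section MrpowLemmas
variable {l : Type*} [Fintype l] [DecidableEq l]

lemma mrpow_eq_cfc {A : Matrix l l ℂ} (hA : A.IsHermitian) (r : ℝ) :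
    mrpow A r = hA.cfc (fun x => x ^ r) := by
  rw [mrpow, dif_pos hA]; rfl

lemma mrpow_isHermitian {A : Matrix l l ℂ} (hA : A.IsHermitian) (r : ℝ) :
    (mrpow A r).IsHermitian := by
  rw [mrpow_eq_cfc hA]; exact cfc_isHermitian hA _

lemma star_mrpow {A : Matrix l l ℂ} (hA : A.IsHermitian) (r : ℝ) :
    star (mrpow A r) = mrpow A r := mrpow_isHermitian hA r

lemma mrpow_posDef {A : Matrix l l ℂ} (hA : A.PosDef) (r : ℝ) : (mrpow A r).PosDef := by
  rw [mrpow_eq_cfc hA.1]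
  exact cfc_posDef hA.1 _ fun i => Real.rpow_pos_of_pos (hA.eigenvalues_pos i) r

lemma mrpow_mul_mrpow {A : Matrix l l ℂ} (hA : A.PosDef) (r r' : ℝ) :
    mrpow A r * mrpow A r' = mrpow A (r + r') := by
  rw [mrpow_eq_cfc hA.1, mrpow_eq_cfc hA.1, mrpow_eq_cfc hA.1, cfc_mul_cfc]
  exact cfc_congr_eigs hA.1 fun i => (Real.rpow_add (hA.eigenvalues_pos i) r r').symm

lemma mrpow_zero {A : Matrix l l ℂ} (hA : A.IsHermitian) : mrpow A 0 = 1 := by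
  rw [mrpow_eq_cfc hA]
  exact cfc_one' hA fun i => Real.rpow_zero _

lemma mrpow_one {A : Matrix l l ℂ} (hA : A.IsHermitian) : mrpow A 1 = A := by
  rw [mrpow_eq_cfc hA]
  exact cfc_eq_self hA fun i => Real.rpow_one _

lemma mrpow_mul_mrpow_neg {A : Matrix l l ℂ} (hA : A.PosDef) (r : ℝ) :
    mrpow A r * mrpow A (-r) = 1 := by
  rw [mrpow_mul_mrpow hA, add_neg_cancel, mrpow_zero hA.1]

lemma mrpow_isUnit {A : Matrix l l ℂ} (hA : A.PosDef) (r : ℝ) : IsUnit (mrpow A r) := by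
  refine ⟨⟨_, mrpow A (-r), mrpow_mul_mrpow_neg hA r, ?_⟩, rfl⟩
  rw [mrpow_mul_mrpow hA, neg_add_cancel, mrpow_zero hA.1]

lemma mrpow_inv_eq {A : Matrix l l ℂ} (hA : A.PosDef) (r : ℝ) :
    (mrpow A r)⁻¹ = mrpow A (-r) :=
  Matrix.inv_eq_right_inv (mrpow_mul_mrpow_neg hA r)

lemma mrpow_matrix_inv {A : Matrix l l ℂ} (hA : A.PosDef) (u : ℝ) :
    mrpow (A⁻¹) u = mrpow A (-u) := by
  have hU := (Matrix.IsHermitian.eigenvectorUnitary hA.1).2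
  have hsU : (star (Matrix.IsHermitian.eigenvectorUnitary hA.1) : Matrix l l ℂ) *
      (Matrix.IsHermitian.eigenvectorUnitary hA.1 : Matrix l l ℂ) = 1 :=
    Matrix.mem_unitaryGroup_iff'.mp hU
  have key : ∀ (U : Matrix l l ℂ) (d e : l → ℂ), star U * U = 1 →
      (U * Matrix.diagonal d * star U) * (U * Matrix.diagonal e * star U) =
        U * Matrix.diagonal (fun i => d i * e i) * star U := by
    intro U d e hsU'
    simp only [Matrix.mul_assoc]
    rw [← Matrix.mul_assoc (star U) U, hsU', Matrix.one_mul,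
      ← Matrix.mul_assoc (Matrix.diagonal d) (Matrix.diagonal e), Matrix.diagonal_mul_diagonal]
  have hdec : A⁻¹ = (Matrix.IsHermitian.eigenvectorUnitary hA.1 : Matrix l l ℂ) *
      Matrix.diagonal (fun i => (((hA.1.eigenvalues i)⁻¹ : ℝ) : ℂ)) *
      (star (Matrix.IsHermitian.eigenvectorUnitary hA.1) : Matrix l l ℂ) := by
    refine Matrix.inv_eq_right_inv ?_
    have h2 := congrArg (fun Y => Y * ((Matrix.IsHermitian.eigenvectorUnitary hA.1 : Matrix l l ℂ) *
      Matrix.diagonal (fun i => (((hA.1.eigenvalues i)⁻¹ : ℝ) : ℂ)) *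
      (star (Matrix.IsHermitian.eigenvectorUnitary hA.1) : Matrix l l ℂ)))
      (hA.1.spectral_theorem.trans (Unitary.conjStarAlgAut_apply (S := ℂ) _ _))
    beta_reduce at h2
    rw [h2, key _ _ _ hsU]
    have : (Matrix.diagonal fun i => (RCLike.ofReal ∘ hA.1.eigenvalues) i *
        (((hA.1.eigenvalues i)⁻¹ : ℝ) : ℂ)) = (1 : Matrix l l ℂ) := by
      rw [← Matrix.diagonal_one]
      refine congrArg Matrix.diagonal (funext fun i => ?_)
      have hne : (hA.1.eigenvalues i : ℝ) ≠ 0 := (hA.eigenvalues_pos i).ne'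
      simp only [Function.comp_apply]
      push_cast
      exact mul_inv_cancel₀ (RCLike.ofReal_ne_zero.mpr hne)
    rw [this, Matrix.mul_one, Matrix.mem_unitaryGroup_iff.mp hU]
  rw [mrpow_eq_cfc (hA.inv).1,
    cfc_eq_of_decomp (hA.inv).1 _ hU (fun i => (hA.1.eigenvalues i)⁻¹) hdec,
    mrpow_eq_cfc hA.1,
    cfc_eq_of_decomp hA.1 _ hU (fun i => hA.1.eigenvalues i) hA.1.spectral_theorem]
  refine congrArg (fun D => _ * D * _) (congrArg Matrix.diagonal (funext fun i => ?_))
  rw [Real.rpow_neg (hA.eigenvalues_pos i).le, ← Real.inv_rpow (hA.eigenvalues_pos i).le]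

end MrpowLemmas

section KronTools
open Kronecker
variable {n : Type*} [Fintype n] [DecidableEq n] {m : Type*} [Fintype m] [DecidableEq m]

lemma conjTranspose_kron (A : Matrix n n ℂ) (B : Matrix m m ℂ) :
    (A ⊗ₖ B)ᴴ = Aᴴ ⊗ₖ Bᴴ := by
  ext ⟨i, j⟩ ⟨k, s⟩
  simp [Matrix.conjTranspose_apply, Matrix.kroneckerMap_apply]

lemma kron_mem_unitary {U : Matrix n n ℂ} {V : Matrix m m ℂ}
    (hU : U ∈ Matrix.unitaryGroup n ℂ) (hV : V ∈ Matrix.unitaryGroup m ℂ) :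
    U ⊗ₖ V ∈ Matrix.unitaryGroup (n × m) ℂ := by
  rw [Matrix.mem_unitaryGroup_iff, Matrix.star_eq_conjTranspose, conjTranspose_kron,
    ← Matrix.mul_kronecker_mul, ← Matrix.star_eq_conjTranspose U, ← Matrix.star_eq_conjTranspose V,
    Matrix.mem_unitaryGroup_iff.mp hU, Matrix.mem_unitaryGroup_iff.mp hV,
    Matrix.one_kronecker_one]

lemma isHermitian_kron {P : Matrix n n ℂ} {Q : Matrix m m ℂ}
    (hP : P.IsHermitian) (hQ : Q.IsHermitian) : (P ⊗ₖ Q).IsHermitian := by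
  rw [Matrix.IsHermitian, conjTranspose_kron, hP.eq, hQ.eq]

lemma kron_decomp {P : Matrix n n ℂ} {Q : Matrix m m ℂ}
    (hP : P.IsHermitian) (hQ : Q.IsHermitian) :
    P ⊗ₖ Q = ((Matrix.IsHermitian.eigenvectorUnitary hP : Matrix n n ℂ) ⊗ₖ
        (Matrix.IsHermitian.eigenvectorUnitary hQ : Matrix m m ℂ)) *
      Matrix.diagonal (fun ij : n × m =>
        (((hP.eigenvalues ij.1 * hQ.eigenvalues ij.2 : ℝ)) : ℂ)) *
      star ((Matrix.IsHermitian.eigenvectorUnitary hP : Matrix n n ℂ) ⊗ₖ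
        (Matrix.IsHermitian.eigenvectorUnitary hQ : Matrix m m ℂ)) := by
  conv_lhs => rw [hP.spectral_theorem, hQ.spectral_theorem]
  simp only [Unitary.conjStarAlgAut_apply, Matrix.star_eq_conjTranspose]
  rw [Matrix.mul_kronecker_mul, Matrix.mul_kronecker_mul, Matrix.diagonal_kronecker_diagonal,
    ← conjTranspose_kron]
  refine congrArg₂ (fun D S => (_ * D) * S) (congrArg Matrix.diagonal (funext fun ij => ?_)) rfl
  simp only [Function.comp_apply]
  push_cast
  rfl

lemma mrpow_kron {P : Matrix n n ℂ} {Q : Matrix m m ℂ} (hP : P.PosDef) (hQ : Q.PosDef) (r : ℝ) :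
    mrpow (P ⊗ₖ Q) r = mrpow P r ⊗ₖ mrpow Q r := by
  have hH := isHermitian_kron hP.1 hQ.1
  rw [mrpow_eq_cfc hH, cfc_eq_of_decomp hH _
    (kron_mem_unitary (Matrix.IsHermitian.eigenvectorUnitary hP.1).2
      (Matrix.IsHermitian.eigenvectorUnitary hQ.1).2)
    (fun ij => hP.1.eigenvalues ij.1 * hQ.1.eigenvalues ij.2) (kron_decomp hP.1 hQ.1),
    mrpow_eq_cfc hP.1, mrpow_eq_cfc hQ.1, Matrix.IsHermitian.cfc, Matrix.IsHermitian.cfc]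
  simp only [Unitary.conjStarAlgAut_apply, Matrix.star_eq_conjTranspose]
  rw [Matrix.mul_kronecker_mul, Matrix.mul_kronecker_mul, Matrix.diagonal_kronecker_diagonal,
    ← conjTranspose_kron]
  refine congrArg₂ (fun D S => (_ * D) * S) (congrArg Matrix.diagonal (funext fun ij => ?_)) rfl
  rw [Real.mul_rpow (hP.eigenvalues_pos ij.1).le (hQ.eigenvalues_pos ij.2).le]
  push_cast
  rfl

lemma posDef_kron {P : Matrix n n ℂ} {Q : Matrix m m ℂ} (hP : P.PosDef) (hQ : Q.PosDef) :
    (P ⊗ₖ Q).PosDef := by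
  rw [kron_decomp hP.1 hQ.1, Matrix.star_eq_conjTranspose]
  have hW := kron_mem_unitary (Matrix.IsHermitian.eigenvectorUnitary hP.1).2
    (Matrix.IsHermitian.eigenvectorUnitary hQ.1).2
  refine posDef_conj (Matrix.PosDef.diagonal fun ij => ?_)
    ⟨⟨_, _, Matrix.mem_unitaryGroup_iff.mp hW, Matrix.mem_unitaryGroup_iff'.mp hW⟩, rfl⟩
  exact Complex.zero_lt_real.mpr (mul_pos (hP.eigenvalues_pos ij.1) (hQ.eigenvalues_pos ij.2))

lemma mid_posDef {l : Type*} [Fintype l] [DecidableEq l] {A B : Matrix l l ℂ}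
    (hA : A.PosDef) (hB : B.PosDef) :
    (mrpow A (-(1/2)) * B * mrpow A (-(1/2))).PosDef := by
  have h := posDef_conj hB (mrpow_isUnit hA (-(1/2)))
  rwa [(mrpow_isHermitian hA.1 (-(1/2)) : _ᴴ = _)] at h

lemma wgmean_kron {A B : Matrix n n ℂ} {C D : Matrix m m ℂ}
    (hA : A.PosDef) (hB : B.PosDef) (hC : C.PosDef) (hD : D.PosDef) (u : ℝ) :
    wgmean (A ⊗ₖ C) (B ⊗ₖ D) u = wgmean A B u ⊗ₖ wgmean C D u := by
  rw [wgmean, wgmean, wgmean, mrpow_kron hA hC, mrpow_kron hA hC,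
    ← Matrix.mul_kronecker_mul, ← Matrix.mul_kronecker_mul,
    mrpow_kron (mid_posDef hA hB) (mid_posDef hC hD),
    ← Matrix.mul_kronecker_mul, ← Matrix.mul_kronecker_mul]

end KronTools

section MonoSymm
variable {l : Type*} [Fintype l] [DecidableEq l]

lemma scalar_ineq {x s t : ℝ} (hx : 0 < x) (hs : 1/2 ≤ s) (hst : s ≤ t) (ht : t ≤ 1) :
    0 ≤ x ^ t + x ^ (1 - t) - x ^ s - x ^ (1 - s) := by
  have key : x ^ t + x ^ (1 - t) - x ^ s - x ^ (1 - s)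
      = (x ^ t - x ^ s) * (1 - x ^ (1 - s - t)) := by
    have h1 : x ^ t * x ^ (1 - s - t) = x ^ (1 - s) := by
      rw [← Real.rpow_add hx]; ring_nf
    have h2 : x ^ s * x ^ (1 - s - t) = x ^ (1 - t) := by
      rw [← Real.rpow_add hx]; ring_nf
    rw [sub_mul, mul_sub, mul_sub, mul_one, mul_one, h1, h2]
    ring
  rw [key]
  have hst' : (1 : ℝ) - s - t ≤ 0 := by linarith
  rcases le_total 1 x with h1x | hx1
  · have h2 : x ^ (1 - s - t) ≤ 1 := by
      have := Real.rpow_le_rpow_of_exponent_le h1x hst'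
      rwa [Real.rpow_zero] at this
    exact mul_nonneg (sub_nonneg.mpr (Real.rpow_le_rpow_of_exponent_le h1x hst))
      (sub_nonneg.mpr h2)
  · have h1 : x ^ t ≤ x ^ s := Real.rpow_le_rpow_of_exponent_ge hx hx1 hst
    have h2 : (1 : ℝ) ≤ x ^ (1 - s - t) := by
      have := Real.rpow_le_rpow_of_exponent_ge hx hx1 hst'
      rwa [Real.rpow_zero] at this
    have := mul_nonneg (neg_nonneg.mpr (sub_nonpos.mpr h1))
      (neg_nonneg.mpr (sub_nonpos.mpr h2))
    rwa [neg_mul_neg] at this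

variable {l : Type*} [Fintype l] [DecidableEq l]

lemma wgmean_mono {X Y : Matrix l l ℂ} (hX : X.PosDef) (hY : Y.PosDef)
    {s t : ℝ} (hs : 1/2 ≤ s) (hst : s ≤ t) (ht : t ≤ 1) :
    ((wgmean X Y t + wgmean X Y (1 - t)) - (wgmean X Y s + wgmean X Y (1 - s))).PosSemidef := by
  have hM : (mrpow X (-(1/2)) * Y * mrpow X (-(1/2))).PosDef := mid_posDef hX hY
  set M := mrpow X (-(1/2)) * Y * mrpow X (-(1/2)) with hMdef
  set a := mrpow X (1/2) with hadef
  have hexp : ∀ u : ℝ, wgmean X Y u = a * mrpow M u * a := fun u => rfl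
  have hdiff : (wgmean X Y t + wgmean X Y (1 - t)) - (wgmean X Y s + wgmean X Y (1 - s))
      = a * ((mrpow M t + mrpow M (1 - t)) - (mrpow M s + mrpow M (1 - s))) * a := by
    simp only [hexp]
    noncomm_ring
  rw [hdiff]
  have hinner : ((mrpow M t + mrpow M (1 - t)) - (mrpow M s + mrpow M (1 - s)))
      = hM.1.cfc (fun x => (x ^ t + x ^ (1 - t)) - (x ^ s + x ^ (1 - s))) := by
    rw [mrpow_eq_cfc hM.1, mrpow_eq_cfc hM.1, mrpow_eq_cfc hM.1, mrpow_eq_cfc hM.1,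
      cfc_add_cfc, cfc_add_cfc, cfc_sub_cfc]
  rw [hinner]
  have hPSD : (hM.1.cfc (fun x => (x ^ t + x ^ (1 - t)) - (x ^ s + x ^ (1 - s)))).PosSemidef := by
    refine cfc_posSemidef hM.1 _ fun i => ?_
    have := scalar_ineq (hM.eigenvalues_pos i) hs hst ht
    linarith
  have ha : a = aᴴ := (mrpow_isHermitian hX.1 (1/2)).symm
  rw [show (a * (hM.1.cfc fun x => (x ^ t + x ^ (1 - t)) - (x ^ s + x ^ (1 - s))) * a)
     = (a * (hM.1.cfc fun x => (x ^ t + x ^ (1 - t)) - (x ^ s + x ^ (1 - s))) * aᴴ) by rw [← ha]]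
  exact hPSD.mul_mul_conjTranspose_same a

lemma wgmean_symm {A B : Matrix l l ℂ} (hA : A.PosDef) (hB : B.PosDef) (u : ℝ) :
    wgmean B A u = wgmean A B (1 - u) := by
  have haai : mrpow A (1/2) * mrpow A (-(1/2)) = 1 := by
    rw [mrpow_mul_mrpow hA, add_neg_cancel, mrpow_zero hA.1]
  have haia : mrpow A (-(1/2)) * mrpow A (1/2) = 1 := by
    rw [mrpow_mul_mrpow hA, neg_add_cancel, mrpow_zero hA.1]
  have hbbi : mrpow B (1/2) * mrpow B (-(1/2)) = 1 := by
    rw [mrpow_mul_mrpow hB, add_neg_cancel, mrpow_zero hB.1]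
  have hbib : mrpow B (-(1/2)) * mrpow B (1/2) = 1 := by
    rw [mrpow_mul_mrpow hB, neg_add_cancel, mrpow_zero hB.1]
  have hM : (mrpow A (-(1/2)) * B * mrpow A (-(1/2))).PosDef := mid_posDef hA hB
  have hN : (mrpow B (-(1/2)) * A * mrpow B (-(1/2))).PosDef := mid_posDef hB hA
  have haiA : mrpow A (-(1/2)) * A = mrpow A (1/2) := by
    calc mrpow A (-(1/2)) * A = mrpow A (-(1/2)) * mrpow A 1 := by rw [mrpow_one hA.1]
      _ = mrpow A (1/2) := by
          rw [mrpow_mul_mrpow hA, show -(1/2 : ℝ) + 1 = 1/2 by norm_num]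
  have hBbb : B * (mrpow B (-(1/2)) * mrpow B (-(1/2))) = 1 := by
    calc B * (mrpow B (-(1/2)) * mrpow B (-(1/2)))
        = mrpow B 1 * mrpow B (-(1/2)) * mrpow B (-(1/2)) := by
          rw [mrpow_one hB.1, Matrix.mul_assoc]
      _ = 1 := by
          rw [mrpow_mul_mrpow hB, mrpow_mul_mrpow hB,
            show (1 : ℝ) + -(1/2) + -(1/2) = 0 by norm_num, mrpow_zero hB.1]
  have hMinv : (mrpow A (-(1/2)) * B * mrpow A (-(1/2)))⁻¹
      = mrpow A (1/2) * (mrpow B (-(1/2)) * mrpow B (-(1/2))) * mrpow A (1/2) := by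
    refine Matrix.inv_eq_right_inv ?_
    calc (mrpow A (-(1/2)) * B * mrpow A (-(1/2)))
          * (mrpow A (1/2) * (mrpow B (-(1/2)) * mrpow B (-(1/2))) * mrpow A (1/2))
        = mrpow A (-(1/2)) * B * ((mrpow A (-(1/2)) * mrpow A (1/2))
            * (mrpow B (-(1/2)) * mrpow B (-(1/2)))) * mrpow A (1/2) := by noncomm_ring
      _ = mrpow A (-(1/2)) * (B * (mrpow B (-(1/2)) * mrpow B (-(1/2)))) * mrpow A (1/2) := by
          rw [haia, Matrix.one_mul]; noncomm_ring
      _ = mrpow A (-(1/2)) * mrpow A (1/2) := by rw [hBbb, Matrix.mul_one]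
      _ = 1 := haia
  have hXN : (mrpow A (-(1/2)) * mrpow B (1/2))
        * (mrpow B (-(1/2)) * A * mrpow B (-(1/2)))
      = (mrpow A (-(1/2)) * B * mrpow A (-(1/2)))⁻¹
        * (mrpow A (-(1/2)) * mrpow B (1/2)) := by
    have lhs : (mrpow A (-(1/2)) * mrpow B (1/2))
          * (mrpow B (-(1/2)) * A * mrpow B (-(1/2)))
        = mrpow A (1/2) * mrpow B (-(1/2)) := by
      calc (mrpow A (-(1/2)) * mrpow B (1/2)) * (mrpow B (-(1/2)) * A * mrpow B (-(1/2)))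
          = mrpow A (-(1/2)) * ((mrpow B (1/2) * mrpow B (-(1/2))) * A) * mrpow B (-(1/2)) := by
            noncomm_ring
        _ = (mrpow A (-(1/2)) * A) * mrpow B (-(1/2)) := by
            rw [hbbi, Matrix.one_mul]
        _ = mrpow A (1/2) * mrpow B (-(1/2)) := by rw [haiA]
    have rhs : (mrpow A (-(1/2)) * B * mrpow A (-(1/2)))⁻¹
          * (mrpow A (-(1/2)) * mrpow B (1/2))
        = mrpow A (1/2) * mrpow B (-(1/2)) := by
      rw [hMinv]
      calc mrpow A (1/2) * (mrpow B (-(1/2)) * mrpow B (-(1/2))) * mrpow A (1/2)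
            * (mrpow A (-(1/2)) * mrpow B (1/2))
          = mrpow A (1/2) * (mrpow B (-(1/2)) * (mrpow B (-(1/2))
              * ((mrpow A (1/2) * mrpow A (-(1/2))) * mrpow B (1/2)))) := by noncomm_ring
        _ = mrpow A (1/2) * (mrpow B (-(1/2)) * (mrpow B (-(1/2)) * mrpow B (1/2))) := by
            rw [haai, Matrix.one_mul]
        _ = mrpow A (1/2) * mrpow B (-(1/2)) := by rw [hbib, Matrix.mul_one]
    rw [lhs, rhs]
  have hint : (mrpow A (-(1/2)) * mrpow B (1/2))
        * mrpow (mrpow B (-(1/2)) * A * mrpow B (-(1/2))) u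
      = mrpow (mrpow A (-(1/2)) * B * mrpow A (-(1/2))) (-u)
        * (mrpow A (-(1/2)) * mrpow B (1/2)) := by
    have h1 := cfc_intertwine hN.1 (hM.inv).1 _ hXN (fun x => x ^ u)
    rw [← mrpow_eq_cfc hN.1, ← mrpow_eq_cfc (hM.inv).1, mrpow_matrix_inv hM] at h1
    exact h1
  have hab : mrpow A (1/2) * (mrpow A (-(1/2)) * mrpow B (1/2)) = mrpow B (1/2) := by
    rw [← Matrix.mul_assoc, haai, Matrix.one_mul]
  have hXb : (mrpow A (-(1/2)) * mrpow B (1/2)) * mrpow B (1/2) = mrpow A (-(1/2)) * B := by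
    rw [Matrix.mul_assoc, mrpow_mul_mrpow hB, show (1:ℝ)/2 + 1/2 = 1 by norm_num,
      mrpow_one hB.1]
  have hMa : (mrpow A (-(1/2)) * B * mrpow A (-(1/2))) * mrpow A (1/2)
      = mrpow A (-(1/2)) * B := by
    rw [Matrix.mul_assoc, haia, Matrix.mul_one]
  calc wgmean B A u
      = mrpow B (1/2) * mrpow (mrpow B (-(1/2)) * A * mrpow B (-(1/2))) u * mrpow B (1/2) := rfl
    _ = mrpow A (1/2) * ((mrpow A (-(1/2)) * mrpow B (1/2))
          * mrpow (mrpow B (-(1/2)) * A * mrpow B (-(1/2))) u) * mrpow B (1/2) := by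
        rw [← Matrix.mul_assoc, hab]
    _ = mrpow A (1/2) * (mrpow (mrpow A (-(1/2)) * B * mrpow A (-(1/2))) (-u)
          * (mrpow A (-(1/2)) * mrpow B (1/2))) * mrpow B (1/2) := by rw [hint]
    _ = mrpow A (1/2) * mrpow (mrpow A (-(1/2)) * B * mrpow A (-(1/2))) (-u)
          * ((mrpow A (-(1/2)) * mrpow B (1/2)) * mrpow B (1/2)) := by noncomm_ring
    _ = mrpow A (1/2) * mrpow (mrpow A (-(1/2)) * B * mrpow A (-(1/2))) (-u)
          * ((mrpow A (-(1/2)) * B * mrpow A (-(1/2))) * mrpow A (1/2)) := by rw [hXb, hMa]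
    _ = mrpow A (1/2) * (mrpow (mrpow A (-(1/2)) * B * mrpow A (-(1/2))) (-u)
          * mrpow (mrpow A (-(1/2)) * B * mrpow A (-(1/2))) 1) * mrpow A (1/2) := by
        rw [mrpow_one hM.1]; noncomm_ring
    _ = mrpow A (1/2) * mrpow (mrpow A (-(1/2)) * B * mrpow A (-(1/2))) (1 - u)
          * mrpow A (1/2) := by
        rw [mrpow_mul_mrpow hM, show -u + 1 = 1 - u by ring]
    _ = wgmean A B (1 - u) := rfl

end MonoSymm

open Kronecker

lemma sum_kron_sum {n : Type*} [Fintype n] [DecidableEq n] {m : Type*} [Fintype m]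
    [DecidableEq m] {κ : Type*} (S : Finset κ) (f : κ → Matrix n n ℂ) (g : κ → Matrix m m ℂ) :
    (∑ j ∈ S, f j) ⊗ₖ (∑ k ∈ S, g k) = ∑ j ∈ S, ∑ k ∈ S, f j ⊗ₖ g k := by
  ext ⟨i, p⟩ ⟨i', p'⟩
  simp only [Matrix.kroneckerMap_apply, Matrix.sum_apply, Finset.sum_mul, Finset.mul_sum]
  rw [Finset.sum_comm]

lemma posSemidef_sum {n : Type*} [Fintype n] [DecidableEq n] {κ : Type*} (S : Finset κ)
    (f : κ → Matrix n n ℂ) (h : ∀ i ∈ S, (f i).PosSemidef) : (∑ i ∈ S, f i).PosSemidef :=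
  Finset.sum_induction f _ (fun _ _ ha hb => ha.add hb) (Matrix.PosSemidef.zero) h

open Kronecker in
theorem callebaut_tensor {l : Type*} [Fintype l] [DecidableEq l] (m : ℕ)
    (A B : Fin m → Matrix l l ℂ) (hA : ∀ j, (A j).PosDef) (hB : ∀ j, (B j).PosDef)
    (s t : ℝ) (hs : 1/2 ≤ s) (hst : s ≤ t) (ht : t ≤ 1) :
    loewnerLE
      ((∑ j, wgmean (A j) (B j) s) ⊗ₖ (∑ j, wgmean (A j) (B j) (1 - s)) +
        (∑ j, wgmean (A j) (B j) (1 - s)) ⊗ₖ (∑ j, wgmean (A j) (B j) s))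
      ((∑ j, wgmean (A j) (B j) t) ⊗ₖ (∑ j, wgmean (A j) (B j) (1 - t)) +
        (∑ j, wgmean (A j) (B j) (1 - t)) ⊗ₖ (∑ j, wgmean (A j) (B j) t)) := by
  rw [loewnerLE]
  have H : ∀ u : ℝ, (∑ j, wgmean (A j) (B j) u) ⊗ₖ (∑ k, wgmean (A k) (B k) (1 - u))
      = ∑ j, ∑ k, wgmean (A j ⊗ₖ B k) (B j ⊗ₖ A k) u := by
    intro u
    rw [sum_kron_sum]
    refine Finset.sum_congr rfl fun j _ => Finset.sum_congr rfl fun k _ => ?_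
    rw [← wgmean_symm (hA k) (hB k) u, ← wgmean_kron (hA j) (hB j) (hB k) (hA k) u]
  have H' : ∀ u : ℝ, (∑ j, wgmean (A j) (B j) (1 - u)) ⊗ₖ (∑ k, wgmean (A k) (B k) u)
      = ∑ j, ∑ k, wgmean (A j ⊗ₖ B k) (B j ⊗ₖ A k) (1 - u) := by
    intro u
    rw [sum_kron_sum]
    refine Finset.sum_congr rfl fun j _ => Finset.sum_congr rfl fun k _ => ?_
    rw [wgmean_symm (hB k) (hA k) u, ← wgmean_kron (hA j) (hB j) (hB k) (hA k) (1 - u)]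
  rw [H t, H' t, H s, H' s]
  have hcomb :
      (∑ j, ∑ k, wgmean (A j ⊗ₖ B k) (B j ⊗ₖ A k) t
        + ∑ j, ∑ k, wgmean (A j ⊗ₖ B k) (B j ⊗ₖ A k) (1 - t))
      - (∑ j, ∑ k, wgmean (A j ⊗ₖ B k) (B j ⊗ₖ A k) s
        + ∑ j, ∑ k, wgmean (A j ⊗ₖ B k) (B j ⊗ₖ A k) (1 - s))
      = ∑ j, ∑ k,
        ((wgmean (A j ⊗ₖ B k) (B j ⊗ₖ A k) t + wgmean (A j ⊗ₖ B k) (B j ⊗ₖ A k) (1 - t))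
        - (wgmean (A j ⊗ₖ B k) (B j ⊗ₖ A k) s + wgmean (A j ⊗ₖ B k) (B j ⊗ₖ A k) (1 - s))) := by
    simp only [← Finset.sum_add_distrib, ← Finset.sum_sub_distrib]
  rw [hcomb]
  refine posSemidef_sum _ _ fun j _ => posSemidef_sum _ _ fun k _ => ?_
  exact wgmean_mono (posDef_kron (hA j) (hB k)) (posDef_kron (hB j) (hA k)) hs hst ht
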